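/- arXiv:1503.07502 — 2 statements merged into one kernel-verified Lean document; each statement's English description precedes it below -/
import Mathlib

section
/- Let f be a sieve function of range Q with Eratosthenes transform g supported in [1,Q]. Then f admits the finite Ramanujan expansion f(n) = ∑_{ℓ ≤ Q} R_ℓ(f) c_ℓ(n) for every positive integer n, where c_ℓ(n) = ∑_{1 ≤ j ≤ ℓ, (j,ℓ)=1} e(jn/ℓ) is the Ramanujan sum and R_ℓ(f) = ∑_{d ≤ Q, ℓ|d} g(d)/d. -/
open Finset
open scoped Classical

noncomputable section

/-- `e(α) = e^{2πiα}`. -/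
def expi (α : ℝ) : ℂ := Complex.exp (2 * Real.pi * Complex.I * α)

/-- The sieve function of range `Q` attached to the Eratosthenes transform `g`:
`f(n) = ∑_{d ∣ n, d ≤ Q} g(d)`. -/
def sieveFn (g : ℕ → ℝ) (Q : ℕ) (n : ℕ) : ℝ :=
  ∑ d ∈ n.divisors.filter (fun d => d ≤ Q), g d

/-- The sieve function evaluated at integer arguments (used for shifted arguments
`f(n-a)`, divisibility being understood in `ℤ`). -/
def sieveZ (g : ℕ → ℝ) (Q : ℕ) (m : ℤ) : ℝ :=
  ∑ d ∈ Finset.Icc 1 Q, if (d : ℤ) ∣ m then g d else 0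

/-- `g` is essentially bounded, with constant `Cg ε` for the exponent `ε`:
`g(d) ≪_ε d^ε` for every `ε > 0`. -/
def EssBddWith (Cg : ℝ → ℝ) (g : ℕ → ℝ) : Prop :=
  ∀ ε : ℝ, 0 < ε → ∀ d : ℕ, 1 ≤ d → |g d| ≤ Cg ε * (d : ℝ) ^ ε

/-- `g` is supported in `[1,Q]`. -/
def SuppIn (g : ℕ → ℝ) (Q : ℕ) : Prop := ∀ d : ℕ, g d ≠ 0 → 1 ≤ d ∧ d ≤ Q

/-- The restricted weight `w_H`. -/
def wH (w : ℝ → ℝ) (H : ℕ) (h : ℤ) : ℝ := if |h| ≤ (H : ℤ) then w h else 0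

/-- `ŵ_H(β) = ∑_{0 ≤ |h| ≤ H} w(h) e(hβ)`. -/
def wHat (w : ℝ → ℝ) (H : ℕ) (β : ℝ) : ℂ :=
  ∑ h ∈ Finset.Icc (-(H : ℤ)) (H : ℤ), (w h : ℂ) * expi (h * β)

/-- `ŵ_H(0)`, as a real number. -/
def wHat0 (w : ℝ → ℝ) (H : ℕ) : ℝ := ∑ h ∈ Finset.Icc (-(H : ℤ)) (H : ℤ), w h

/-- The correlation `W_H(a) = ∑_h w_H(h) w_H(h-a)` of `w_H`. -/
def WHcorr (w : ℝ → ℝ) (H : ℕ) (a : ℤ) : ℝ :=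
  ∑ h ∈ Finset.Icc (-(H : ℤ)) (H : ℤ), wH w H h * wH w H (h - a)

/-- `Ŵ_H(β) = ∑_{0 ≤ |h| ≤ 2H} W_H(h) e(hβ)`. -/
def WHat (w : ℝ → ℝ) (H : ℕ) (β : ℝ) : ℂ :=
  ∑ h ∈ Finset.Icc (-(2 * H : ℤ)) (2 * H : ℤ), (WHcorr w H h : ℂ) * expi (h * β)

/-- `Ŵ_H(0)`, as a real number. -/
def WHat0 (w : ℝ → ℝ) (H : ℕ) : ℝ :=
  ∑ h ∈ Finset.Icc (-(2 * H : ℤ)) (2 * H : ℤ), WHcorr w H h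

/-- `L¹_ℓ(F) = (1/ℓ) ∑_{j<ℓ, (j,ℓ)=1} |F(j/ℓ)|` (the sum being over `j ≥ 1`). -/
def Lone (F : ℝ → ℂ) (ℓ : ℕ) : ℝ :=
  (ℓ : ℝ)⁻¹ * ∑ j ∈ (Finset.Ico 1 ℓ).filter (fun j => Nat.Coprime j ℓ), ‖F (j / ℓ)‖

/-- `L²_ℓ(F) = (1/ℓ²) ∑_{j<ℓ} |F(j/ℓ)|²` (the sum being over `j ≥ 1`). -/
def Ltwo (F : ℝ → ℂ) (ℓ : ℕ) : ℝ :=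
  ((ℓ : ℝ) ^ 2)⁻¹ * ∑ j ∈ Finset.Ico 1 ℓ, ‖F (j / ℓ)‖ ^ 2

/-- A good weight: `w_H` is uniformly bounded as `H → ∞` and
`L²_ℓ(ŵ_H) ≪ H/ℓ` for all `ℓ ≥ 1`. -/
def GoodWeight (w : ℝ → ℝ) : Prop :=
  (∃ B : ℝ, ∀ (H : ℕ) (h : ℤ), |wH w H h| ≤ B) ∧
    ∃ C : ℝ, ∀ H ℓ : ℕ, 1 ≤ H → 1 ≤ ℓ → Ltwo (wHat w H) ℓ ≤ C * H / ℓ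

/-- `∑_{n ∼ N, n ≡ a (mod q)} f(n)`. -/
def bandSum (f : ℕ → ℝ) (N q : ℕ) (a : ℤ) : ℝ :=
  ∑ n ∈ (Finset.Ioc N (2 * N)).filter (fun (n : ℕ) => (n : ℤ) % q = a % q), f n

/-- `T_{w,f}(q,N,H) = ∑_{0≤|a|≤H} w(a) ∑_{n∼N, n≡a (q)} f(n) − (ŵ_H(0)/q) ∑_{n∼N} f(n)`. -/
def Twf (w : ℝ → ℝ) (f : ℕ → ℝ) (q N H : ℕ) : ℝ :=
  (∑ a ∈ Finset.Icc (-(H : ℤ)) (H : ℤ), w a * bandSum f N q a) -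
    wHat0 w H * (∑ n ∈ Finset.Ioc N (2 * N), f n) / q

/-- `T_{W,f}(q,N,H) = ∑_a W_H(a) ∑_{n∼N, n≡a (q)} f(n) − (Ŵ_H(0)/q) ∑_{n∼N} f(n)`. -/
def TWf (w : ℝ → ℝ) (f : ℕ → ℝ) (q N H : ℕ) : ℝ :=
  (∑ a ∈ Finset.Icc (-(2 * H : ℤ)) (2 * H : ℤ), WHcorr w H a * bandSum f N q a) -
    WHat0 w H * (∑ n ∈ Finset.Ioc N (2 * N), f n) / q

/-- `T_f(q,N,H) = ∑_{1≤a≤H} ∑_{n∼N, n≡a (q)} f(n) − (H/q) ∑_{n∼N} f(n)`. -/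
def Tf (f : ℕ → ℝ) (q N H : ℕ) : ℝ :=
  (∑ a ∈ Finset.Icc 1 H, bandSum f N q (a : ℤ)) -
    (H : ℝ) * (∑ n ∈ Finset.Ioc N (2 * N), f n) / q

/-- The first Ramanujan coefficient `R_1(f) = ∑_{d ≤ Q} g(d)/d`. -/
def Rcoef1 (g : ℕ → ℝ) (Q : ℕ) : ℝ := ∑ d ∈ Finset.Icc 1 Q, g d / d

/-- The `ℓ`-th Ramanujan coefficient `R_ℓ(f) = ∑_{d ≤ Q, ℓ ∣ d} g(d)/d`. -/
def Rcoef (g : ℕ → ℝ) (Q ℓ : ℕ) : ℝ :=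
  ∑ d ∈ (Finset.Icc 1 Q).filter (fun d => ℓ ∣ d), g d / d

/-- The short weighted sum `∑_n w_H(n−x) f(n)`. -/
def shortSum (w : ℝ → ℝ) (H : ℕ) (f : ℕ → ℝ) (x : ℕ) : ℝ :=
  ∑ n ∈ Finset.Icc 1 (x + H), wH w H ((n : ℤ) - (x : ℤ)) * f n

/-- The mixed weighted Selberg integral
`J_{w,(f₁,f₂)}(N,H) = ∑_{x∼N} ∏_j (∑_n w_H(n−x) f_j(n) − ŵ_H(0) R_1(f_j))`,
where `r_j = R_1(f_j)`. -/
def Jmix (w : ℝ → ℝ) (f₁ f₂ : ℕ → ℝ) (r₁ r₂ : ℝ) (N H : ℕ) : ℝ :=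
  ∑ x ∈ Finset.Ioc N (2 * N),
    (shortSum w H f₁ x - wHat0 w H * r₁) * (shortSum w H f₂ x - wHat0 w H * r₂)

/-- The Selberg integral `J_f(N,H) = ∑_{x∼N} |∑_{x<n≤x+H} f(n) − R_1(f) H|²`,
where `r = R_1(f)`. -/
def Jf (f : ℕ → ℝ) (r : ℝ) (N H : ℕ) : ℝ :=
  ∑ x ∈ Finset.Ioc N (2 * N), ((∑ n ∈ Finset.Ioc x (x + H), f n) - r * H) ^ 2

/-- The correlation `C_{f₁,f₂}(a) = ∑_{n∼N} f₁(n) f₂(n−a)` of the sieve functions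
attached to `g₁, g₂` of ranges `Q₁, Q₂`. -/
def corrFn (g₁ g₂ : ℕ → ℝ) (Q₁ Q₂ N : ℕ) (a : ℤ) : ℝ :=
  ∑ n ∈ Finset.Ioc N (2 * N), sieveFn g₁ Q₁ n * sieveZ g₂ Q₂ ((n : ℤ) - a)

/-- The unit step weight `u`. -/
def ustep : ℝ → ℝ := fun x => if 0 < x then 1 else 0

/-- The Cesàro weight `C_H`. -/
def cesaro (H : ℕ) : ℝ → ℝ := fun x => if |x| ≤ (H : ℝ) then 1 - |x| / H else 0

/-- Goldston's truncated divisor sum `Λ_R(n) = ∑_{d∣n, d≤R} μ(d) log(R/d)`. -/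
def LambdaR (R : ℕ) (n : ℕ) : ℝ :=
  ∑ d ∈ n.divisors.filter (fun d => d ≤ R),
    ((ArithmeticFunction.moebius d : ℤ) : ℝ) * Real.log ((R : ℝ) / d)

/-- Goldston's truncated divisor sum at integer arguments. -/
def LambdaRZ (R : ℕ) (m : ℤ) : ℝ :=
  ∑ d ∈ Finset.Icc 1 R,
    if (d : ℤ) ∣ m then ((ArithmeticFunction.moebius d : ℤ) : ℝ) * Real.log ((R : ℝ) / d) else 0

lemma expi_nat_mul (k : ℕ) (a : ℝ) : expi (k * a) = expi a ^ k := by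
  rw [expi, expi, ← Complex.exp_nat_mul]
  push_cast
  ring_nf

lemma expi_int (m : ℤ) : expi m = 1 := by
  rw [expi]
  have := Complex.exp_int_mul_two_pi_mul_I m
  rw [← this]
  push_cast
  ring_nf

lemma expi_eq_one_iff (x : ℝ) : expi x = 1 ↔ ∃ m : ℤ, x = m := by
  rw [expi, Complex.exp_eq_one_iff]
  constructor
  · rintro ⟨m, hm⟩
    refine ⟨m, ?_⟩
    have h2 : (2 * Real.pi * Complex.I) ≠ 0 := by
      simp [Real.pi_ne_zero, Complex.I_ne_zero]
    have : (x : ℂ) = (m : ℂ) := by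
      apply mul_left_cancel₀ h2
      rw [hm]; ring
    exact_mod_cast this
  · rintro ⟨m, hm⟩
    exact ⟨m, by rw [hm]; push_cast; ring⟩

lemma geom_lemma (d n : ℕ) (hd : 1 ≤ d) :
    ∑ k ∈ Finset.Icc 1 d, expi (k * n / d) = if d ∣ n then (d : ℂ) else 0 := by
  have hd0 : (d : ℝ) ≠ 0 := by positivity
  set z : ℂ := expi (n / d) with hz
  have hterm : ∀ k : ℕ, expi (k * n / d) = z ^ k := by
    intro k
    rw [hz, ← expi_nat_mul]
    congr 1
    field_simp
  by_cases hdn : d ∣ n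
  · have hz1 : z = 1 := by
      obtain ⟨c, rfl⟩ := hdn
      rw [hz]
      have : ((d * c : ℕ) : ℝ) / d = (c : ℤ) := by push_cast; field_simp
      rw [this, expi_int]
    simp only [hterm, hz1, one_pow, Finset.sum_const, Nat.card_Icc]
    simp [hdn]
  · have hz1 : z ≠ 1 := by
      intro h
      rw [hz, expi_eq_one_iff] at h
      obtain ⟨m, hm⟩ := h
      have : (n : ℤ) = m * d := by
        have : (n : ℝ) = m * d := by
          field_simp at hm; rw [mul_comm]; exact_mod_cast hm
        exact_mod_cast this
      exact hdn (by
        have : (d : ℤ) ∣ (n : ℤ) := ⟨m, by linarith [this]⟩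
        exact_mod_cast this)
    have hzd : z ^ d = 1 := by
      rw [← hterm d]
      have : (d : ℝ) * n / d = ((n : ℤ) : ℝ) := by field_simp; exact (Int.cast_natCast n).symm
      rw [this, expi_int]
    simp only [hterm]
    rw [show Finset.Icc 1 d = Finset.Ico 1 (d + 1) by rw [Finset.Ico_add_one_right_eq_Icc]]
    rw [geom_sum_Ico hz1 (by omega)]
    rw [pow_succ, hzd, one_mul, pow_one, sub_self, zero_div]
    simp [hdn]

lemma divisor_sum_lemma (d n : ℕ) (hd : 1 ≤ d) :
    ∑ ℓ ∈ d.divisors, ∑ j ∈ (Finset.Icc 1 ℓ).filter (fun j => Nat.Coprime j ℓ),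
        expi (j * n / ℓ)
      = ∑ k ∈ Finset.Icc 1 d, expi (k * n / d) := by
  have hd0 : d ≠ 0 := by omega
  rw [Finset.sum_sigma']
  refine Finset.sum_bij (fun p _ => p.2 * (d / p.1)) ?_ ?_ ?_ ?_
  · rintro ⟨ℓ, j⟩ hp
    simp only [Finset.mem_sigma, Nat.mem_divisors, Finset.mem_filter,
      Finset.mem_Icc] at hp
    obtain ⟨⟨hld, _⟩, ⟨hj1, hjl⟩, _⟩ := hp
    have hl0 : 0 < ℓ := Nat.pos_of_dvd_of_pos hld hd
    have hq : 0 < d / ℓ := Nat.div_pos (Nat.le_of_dvd hd hld) hl0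
    simp only [Finset.mem_Icc]
    constructor
    · exact Nat.one_le_iff_ne_zero.2 (by positivity)
    · calc j * (d / ℓ) ≤ ℓ * (d / ℓ) := Nat.mul_le_mul_right _ hjl
        _ = d := Nat.mul_div_cancel' hld
  · rintro ⟨ℓ₁, j₁⟩ hp₁ ⟨ℓ₂, j₂⟩ hp₂ h
    simp only [Finset.mem_sigma, Nat.mem_divisors, Finset.mem_filter,
      Finset.mem_Icc] at hp₁ hp₂
    obtain ⟨⟨hld₁, _⟩, ⟨hj₁, hjl₁⟩, hcop₁⟩ := hp₁
    obtain ⟨⟨hld₂, _⟩, ⟨hj₂, hjl₂⟩, hcop₂⟩ := hp₂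
    have key : ∀ (ℓ j : ℕ), ℓ ∣ d → Nat.Coprime j ℓ →
        Nat.gcd (j * (d / ℓ)) d = d / ℓ := by
      intro ℓ j hld hcop
      have hl0 : 0 < ℓ := Nat.pos_of_dvd_of_pos hld hd
      obtain ⟨q, hdq⟩ := hld
      have hq : d / ℓ = q := by rw [hdq]; exact Nat.mul_div_cancel_left _ hl0
      rw [hq, hdq, Nat.gcd_mul_right, hcop, one_mul]
    dsimp only at h
    have hll : d / ℓ₁ = d / ℓ₂ := by
      rw [← key ℓ₁ j₁ hld₁ hcop₁, ← key ℓ₂ j₂ hld₂ hcop₂, h]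
    have hl : ℓ₁ = ℓ₂ := by
      rw [← Nat.div_div_self hld₁ hd0, ← Nat.div_div_self hld₂ hd0, hll]
    subst hl
    have hq : 0 < d / ℓ₁ := Nat.div_pos (Nat.le_of_dvd hd hld₁)
      (Nat.pos_of_dvd_of_pos hld₁ hd)
    have hj : j₁ = j₂ := Nat.eq_of_mul_eq_mul_right hq (by simpa using h)
    simp [hj]
  · intro k hk
    simp only [Finset.mem_Icc] at hk
    obtain ⟨hk1, hkd⟩ := hk
    have hk0 : 0 < k := hk1
    have hm : 0 < Nat.gcd k d := Nat.gcd_pos_of_pos_left _ hk0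
    set m := Nat.gcd k d with hmdef
    have hmk : m ∣ k := Nat.gcd_dvd_left _ _
    have hmd : m ∣ d := Nat.gcd_dvd_right _ _
    refine ⟨⟨d / m, k / m⟩, ?_, ?_⟩
    · simp only [Finset.mem_sigma, Nat.mem_divisors, Finset.mem_filter,
        Finset.mem_Icc]
      refine ⟨⟨Nat.div_dvd_of_dvd hmd, hd0⟩, ⟨?_, Nat.div_le_div_right hkd⟩, ?_⟩
      · exact Nat.div_pos (Nat.le_of_dvd hk0 hmk) hm
      · exact Nat.coprime_div_gcd_div_gcd hm
    · have h1 : d / (d / m) = m := Nat.div_div_self hmd hd0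
      show (k / m) * (d / (d / m)) = k
      rw [h1, Nat.div_mul_cancel hmk]
  · rintro ⟨ℓ, j⟩ hp
    simp only [Finset.mem_sigma, Nat.mem_divisors, Finset.mem_filter,
      Finset.mem_Icc] at hp
    obtain ⟨⟨hld, _⟩, ⟨hj1, hjl⟩, _⟩ := hp
    have hl0 : (ℓ : ℝ) ≠ 0 := by
      have := Nat.pos_of_dvd_of_pos hld hd; positivity
    have hdr : (d : ℝ) ≠ 0 := by positivity
    congr 1
    have hcast : ((d / ℓ : ℕ) : ℝ) = (d : ℝ) / ℓ := Nat.cast_div hld hl0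
    push_cast [hcast]
    field_simp

/-- the finite Ramanujan expansion `f(n) = ∑_{ℓ≤Q} R_ℓ(f) c_ℓ(n)` of a sieve
function of range `Q`, where `c_ℓ(n) = ∑_{1≤j≤ℓ, (j,ℓ)=1} e(jn/ℓ)`. -/
theorem statement10 (Q : ℕ) (hQ : 0 < Q) (g : ℕ → ℝ)
    (hg : ∀ ε : ℝ, 0 < ε → ∃ C : ℝ, ∀ d : ℕ, 1 ≤ d → |g d| ≤ C * (d : ℝ) ^ ε)
    (hsupp : SuppIn g Q) (n : ℕ) (hn : 0 < n) :
    (sieveFn g Q n : ℂ) =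
      ∑ ℓ ∈ Finset.Icc 1 Q, ((Rcoef g Q ℓ : ℝ) : ℂ) *
        ∑ j ∈ (Finset.Icc 1 ℓ).filter (fun j => Nat.Coprime j ℓ), expi (j * n / ℓ) := by
  have hn0 : n ≠ 0 := hn.ne'
  have hset : n.divisors.filter (fun d => d ≤ Q)
      = (Finset.Icc 1 Q).filter (fun d => d ∣ n) := by
    ext a
    simp only [Finset.mem_filter, Nat.mem_divisors, Finset.mem_Icc]
    constructor
    · rintro ⟨⟨h1, _⟩, h2⟩
      exact ⟨⟨Nat.pos_of_dvd_of_pos h1 hn, h2⟩, h1⟩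
    · rintro ⟨⟨h1, h2⟩, h3⟩
      exact ⟨⟨h3, hn0⟩, h2⟩
  have lhs_eq : (sieveFn g Q n : ℂ)
      = ∑ d ∈ Finset.Icc 1 Q, if d ∣ n then (g d : ℂ) else 0 := by
    rw [sieveFn, hset, Finset.sum_filter]
    push_cast
    exact Finset.sum_congr rfl fun d _ => by split <;> simp
  rw [lhs_eq]
  symm
  calc
    ∑ ℓ ∈ Finset.Icc 1 Q, ((Rcoef g Q ℓ : ℝ) : ℂ) *
        ∑ j ∈ (Finset.Icc 1 ℓ).filter (fun j => Nat.Coprime j ℓ), expi (j * n / ℓ)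
      = ∑ ℓ ∈ Finset.Icc 1 Q, ∑ d ∈ Finset.Icc 1 Q,
          (if ℓ ∣ d then ((g d / d : ℝ) : ℂ) *
            ∑ j ∈ (Finset.Icc 1 ℓ).filter (fun j => Nat.Coprime j ℓ),
              expi (j * n / ℓ) else 0) := by
        refine Finset.sum_congr rfl fun ℓ _ => ?_
        rw [Rcoef]
        push_cast
        rw [← Finset.sum_filter, Finset.sum_mul]
    _ = ∑ d ∈ Finset.Icc 1 Q, ∑ ℓ ∈ Finset.Icc 1 Q,
          (if ℓ ∣ d then ((g d / d : ℝ) : ℂ) *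
            ∑ j ∈ (Finset.Icc 1 ℓ).filter (fun j => Nat.Coprime j ℓ),
              expi (j * n / ℓ) else 0) := Finset.sum_comm
    _ = ∑ d ∈ Finset.Icc 1 Q, if d ∣ n then (g d : ℂ) else 0 := by
        refine Finset.sum_congr rfl fun d hd => ?_
        simp only [Finset.mem_Icc] at hd
        have hd1 : 1 ≤ d := hd.1
        have hdset : (Finset.Icc 1 Q).filter (fun ℓ => ℓ ∣ d) = d.divisors := by
          ext ℓ
          simp only [Finset.mem_filter, Finset.mem_Icc, Nat.mem_divisors]
          constructor
          · rintro ⟨_, h2⟩; exact ⟨h2, by omega⟩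
          · rintro ⟨h1, _⟩
            exact ⟨⟨Nat.pos_of_dvd_of_pos h1 hd1, le_trans (Nat.le_of_dvd hd1 h1) hd.2⟩, h1⟩
        rw [← Finset.sum_filter, hdset, ← Finset.mul_sum,
          divisor_sum_lemma d n hd1, geom_lemma d n hd1]
        have hdr : (d : ℂ) ≠ 0 := by
          exact_mod_cast Nat.cast_ne_zero.2 (by omega : d ≠ 0)
        split
        · push_cast
          field_simp
        · simp

end
end

section
/- Let f = g ∗ 1 where g is a real essentially bounded arithmetic function supported in [1,Q] with Q ≪ N. Then for all positive integers H, ∑_{1 ≤ a ≤ H} C_f(a) = R_1(f)² N H + ∑_{q ≤ Q} g(q) T_f(q,N,H) + O_ε(N^ε Q H), where C_f(a) = ∑_{n∼N} f(n) f(n−a). -/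
open Finset
open scoped Classical

noncomputable section

private lemma sum_inv_Icc_le (Q : ℕ) :
    ∑ d ∈ Finset.Icc 1 Q, ((d : ℝ))⁻¹ ≤ 1 + Real.log Q := by
  have h := harmonic_le_one_add_log Q
  rw [harmonic_eq_sum_Icc] at h
  push_cast at h
  exact h

private lemma cast_div_bounds (m d : ℕ) (hd : 0 < d) :
    |((m / d : ℕ) : ℝ) - (m : ℝ) / d| ≤ 1 := by
  have hd' : (0 : ℝ) < d := by exact_mod_cast hd
  have h : (d : ℝ) * ((m / d : ℕ) : ℝ) + ((m % d : ℕ) : ℝ) = m := by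
    exact_mod_cast Nat.div_add_mod m d
  have h1 : (0 : ℝ) ≤ ((m % d : ℕ) : ℝ) := by positivity
  have h2 : ((m % d : ℕ) : ℝ) < d := by exact_mod_cast Nat.mod_lt m hd
  have e : ((m / d : ℕ) : ℝ) - (m : ℝ) / d = -(((m % d : ℕ) : ℝ)) / d := by
    field_simp
    linarith
  rw [e, abs_div, abs_neg, abs_of_nonneg h1, abs_of_pos hd', div_le_one hd']
  linarith

private lemma sieveFn_eq (g : ℕ → ℝ) (Q : ℕ) {n : ℕ} (hn : 0 < n) :
    sieveFn g Q n = ∑ d ∈ Finset.Icc 1 Q, (if d ∣ n then g d else 0) := by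
  rw [sieveFn, ← Finset.sum_filter]
  congr 1
  ext d
  simp only [Finset.mem_filter, Nat.mem_divisors, Finset.mem_Icc]
  constructor
  · rintro ⟨⟨hdn, -⟩, hdQ⟩
    exact ⟨⟨Nat.pos_of_dvd_of_pos hdn hn, hdQ⟩, hdn⟩
  · rintro ⟨⟨-, hdQ⟩, hdn⟩
    exact ⟨⟨hdn, hn.ne'⟩, hdQ⟩

private lemma corr_sum_eq (g : ℕ → ℝ) (Q N H : ℕ) :
    ∑ a ∈ Finset.Icc 1 H, corrFn g g Q Q N (a : ℤ) =
    ∑ q ∈ Finset.Icc 1 Q, g q * ∑ a ∈ Finset.Icc 1 H, bandSum (sieveFn g Q) N q (a : ℤ) := by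
  have step : ∀ a : ℤ, corrFn g g Q Q N a
      = ∑ q ∈ Finset.Icc 1 Q, g q * bandSum (sieveFn g Q) N q a := by
    intro a
    rw [corrFn]
    simp only [sieveZ, Finset.mul_sum, mul_ite, mul_zero]
    rw [Finset.sum_comm]
    refine Finset.sum_congr rfl fun q hq => ?_
    rw [bandSum, Finset.mul_sum, Finset.sum_filter]
    refine Finset.sum_congr rfl fun n hn => ?_
    have hiff : ((q : ℤ) ∣ (n : ℤ) - a) ↔ ((n : ℤ) % (q : ℤ) = a % (q : ℤ)) := by
      rw [show ((n : ℤ) % (q : ℤ) = a % (q : ℤ)) ↔ Int.ModEq (q : ℤ) (n : ℤ) a from Iff.rfl,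
        Int.modEq_iff_dvd, dvd_sub_comm]
    rw [if_congr hiff (mul_comm (sieveFn g Q n) (g q)) rfl]
  calc ∑ a ∈ Finset.Icc 1 H, corrFn g g Q Q N (a : ℤ)
      = ∑ a ∈ Finset.Icc 1 H, ∑ q ∈ Finset.Icc 1 Q, g q * bandSum (sieveFn g Q) N q (a : ℤ) :=
        Finset.sum_congr rfl fun a _ => step a
    _ = _ := by
        rw [Finset.sum_comm]
        exact Finset.sum_congr rfl fun q _ => (Finset.mul_sum _ _ _).symm

private lemma S_eq (g : ℕ → ℝ) (Q N : ℕ) (hN : 0 < N) :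
    ∑ n ∈ Finset.Ioc N (2 * N), sieveFn g Q n
      = ∑ d ∈ Finset.Icc 1 Q, g d * ((((2 * N) / d : ℕ) : ℝ) - ((N / d : ℕ) : ℝ)) := by
  have h1 : ∀ n ∈ Finset.Ioc N (2 * N),
      sieveFn g Q n = ∑ d ∈ Finset.Icc 1 Q, (if d ∣ n then g d else 0) := fun n hn =>
    sieveFn_eq g Q (lt_of_le_of_lt (Nat.zero_le N) (Finset.mem_Ioc.mp hn).1)
  rw [Finset.sum_congr rfl h1, Finset.sum_comm]
  refine Finset.sum_congr rfl fun d hd => ?_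
  have hd1 : 0 < d := (Finset.mem_Icc.mp hd).1
  rw [← Finset.sum_filter, Finset.sum_const, nsmul_eq_mul]
  have hcard : ((Finset.Ioc N (2 * N)).filter (fun n => d ∣ n)).card = (2 * N) / d - N / d := by
    have h2 := Nat.Ioc_filter_dvd_card_eq_div (2 * N) d
    have h3 := Nat.Ioc_filter_dvd_card_eq_div N d
    have hsplit : (Finset.Ioc 0 (2 * N)).filter (fun n => d ∣ n)
        = (Finset.Ioc 0 N).filter (fun n => d ∣ n) ∪ (Finset.Ioc N (2 * N)).filter (fun n => d ∣ n) := by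
      rw [← Finset.filter_union, Finset.Ioc_union_Ioc_eq_Ioc (Nat.zero_le N) (by omega)]
    have hdisj : Disjoint ((Finset.Ioc 0 N).filter (fun n => d ∣ n))
        ((Finset.Ioc N (2 * N)).filter (fun n => d ∣ n)) :=
      Finset.disjoint_filter_filter (Finset.disjoint_left.mpr fun x hx hx' => by
        simp only [Finset.mem_Ioc] at hx hx'; omega)
    rw [hsplit, Finset.card_union_of_disjoint hdisj, h3] at h2
    omega
  rw [hcard]
  have hle : N / d ≤ (2 * N) / d := Nat.div_le_div_right (by omega)
  rw [Nat.cast_sub hle]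
  ring


/-- formula (7): for `f = g ∗ 1` with `g` real, essentially bounded and
supported in `[1,Q]`, `Q ≪ N`, and all positive integers `H`,
`∑_{1≤a≤H} C_f(a) = R_1(f)² N H + ∑_{q≤Q} g(q) T_f(q,N,H) + O_ε(N^ε Q H)`. -/
theorem statement12 (A : ℝ) (hA : 0 < A) (Cg : ℝ → ℝ) (ε : ℝ) (hε : 0 < ε) :
    ∃ C : ℝ, 0 < C ∧ ∀ (N H Q : ℕ) (g : ℕ → ℝ),
      0 < N → 0 < H → 0 < Q → (Q : ℝ) ≤ A * N →
      EssBddWith Cg g → SuppIn g Q →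
      |(∑ a ∈ Finset.Icc 1 H, corrFn g g Q Q N (a : ℤ)) -
          Rcoef1 g Q ^ 2 * N * H -
          ∑ q ∈ Finset.Icc 1 Q, g q * Tf (sieveFn g Q) q N H| ≤
        C * (N : ℝ) ^ ε * Q * H := by
  classical
  have hε4 : 0 < ε / 4 := by positivity
  have hmax1 : (1 : ℝ) ≤ max A 1 := le_max_right A 1
  have hmaxpos : (0 : ℝ) < max A 1 := lt_of_lt_of_le one_pos hmax1
  refine ⟨2 * (|Cg (ε / 4)| + 1) ^ 2 * (1 + 4 / ε) * (max A 1) ^ ε, by positivity, ?_⟩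
  intro N H Q g hN hH hQ hQA hg hsupp
  set ε' : ℝ := ε / 4 with hε'
  set K : ℝ := |Cg ε'| + 1 with hK
  have hKpos : (0 : ℝ) < K := by positivity
  set f : ℕ → ℝ := sieveFn g Q with hf
  set S : ℝ := ∑ n ∈ Finset.Ioc N (2 * N), f n with hS
  set R : ℝ := Rcoef1 g Q with hR
  have hQR : (0 : ℝ) < Q := by exact_mod_cast hQ
  have hQ1 : (1 : ℝ) ≤ Q := by exact_mod_cast hQ
  have hN1 : (1 : ℝ) ≤ N := by exact_mod_cast hN
  have hH0 : (0 : ℝ) ≤ H := Nat.cast_nonneg H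
  -- the exact identity
  have hTf : ∀ q ∈ Finset.Icc 1 Q, g q * Tf f q N H
      = g q * (∑ a ∈ Finset.Icc 1 H, bandSum f N q (a : ℤ)) - (H : ℝ) * S * (g q / q) := by
    intro q hq
    rw [Tf, ← hS]
    ring
  have hRsum : ∑ q ∈ Finset.Icc 1 Q, g q / (q : ℝ) = R := rfl
  have hident : (∑ a ∈ Finset.Icc 1 H, corrFn g g Q Q N (a : ℤ)) -
      Rcoef1 g Q ^ 2 * N * H - ∑ q ∈ Finset.Icc 1 Q, g q * Tf (sieveFn g Q) q N H
      = R * H * (S - R * N) := by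
    rw [← hf, Finset.sum_congr rfl hTf, Finset.sum_sub_distrib, corr_sum_eq g Q N H, ← hf,
      ← Finset.mul_sum, hRsum, ← hR]
    ring
  rw [hident]
  -- bound |R|
  have hgd : ∀ d : ℕ, 1 ≤ d → |g d| ≤ K * (d : ℝ) ^ ε' := by
    intro d hd1
    refine (hg ε' hε4 d hd1).trans ?_
    have hx : (0 : ℝ) ≤ (d : ℝ) ^ ε' := Real.rpow_nonneg (Nat.cast_nonneg d) ε'
    have : Cg ε' ≤ K := by rw [hK]; linarith [le_abs_self (Cg ε')]
    exact mul_le_mul_of_nonneg_right this hx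
  have hdQ' : ∀ d : ℕ, d ∈ Finset.Icc 1 Q → ((d : ℝ)) ^ ε' ≤ (Q : ℝ) ^ ε' := by
    intro d hd
    exact Real.rpow_le_rpow (Nat.cast_nonneg d)
      (by exact_mod_cast (Finset.mem_Icc.mp hd).2) hε4.le
  have hR1 : |R| ≤ K * (Q : ℝ) ^ ε' * (1 + Real.log Q) := by
    have hterm : ∀ d ∈ Finset.Icc 1 Q, |g d / (d : ℝ)| ≤ K * (Q : ℝ) ^ ε' * ((d : ℝ))⁻¹ := by
      intro d hd
      obtain ⟨hd1, hdQ⟩ := Finset.mem_Icc.mp hd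
      have hdR : (0 : ℝ) < d := by exact_mod_cast hd1
      rw [abs_div, abs_of_pos hdR, div_eq_mul_inv]
      refine mul_le_mul ?_ le_rfl (by positivity) (by positivity)
      exact (hgd d hd1).trans (mul_le_mul_of_nonneg_left (hdQ' d hd) hKpos.le)
    calc |R| ≤ ∑ d ∈ Finset.Icc 1 Q, |g d / (d : ℝ)| := Finset.abs_sum_le_sum_abs _ _
      _ ≤ ∑ d ∈ Finset.Icc 1 Q, K * (Q : ℝ) ^ ε' * ((d : ℝ))⁻¹ := Finset.sum_le_sum hterm
      _ = K * (Q : ℝ) ^ ε' * ∑ d ∈ Finset.Icc 1 Q, ((d : ℝ))⁻¹ := by rw [← Finset.mul_sum]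
      _ ≤ K * (Q : ℝ) ^ ε' * (1 + Real.log Q) :=
          mul_le_mul_of_nonneg_left (sum_inv_Icc_le Q) (by positivity)
  have hQe1 : (1 : ℝ) ≤ (Q : ℝ) ^ ε' := Real.one_le_rpow hQ1 hε4.le
  have hlog : 1 + Real.log Q ≤ (1 + 4 / ε) * (Q : ℝ) ^ ε' := by
    have h := Real.log_le_sub_one_of_pos (show (0 : ℝ) < (Q : ℝ) ^ ε' by positivity)
    rw [Real.log_rpow hQR] at h
    have h4 : ε' * (4 / ε) = 1 := by rw [hε']; field_simp
    nlinarith [h, hQe1, hε4]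
  have hRb : |R| ≤ K * (1 + 4 / ε) * ((Q : ℝ) ^ ε' * (Q : ℝ) ^ ε') := by
    calc |R| ≤ K * (Q : ℝ) ^ ε' * (1 + Real.log Q) := hR1
      _ ≤ K * (Q : ℝ) ^ ε' * ((1 + 4 / ε) * (Q : ℝ) ^ ε') :=
          mul_le_mul_of_nonneg_left hlog (by positivity)
      _ = K * (1 + 4 / ε) * ((Q : ℝ) ^ ε' * (Q : ℝ) ^ ε') := by ring
  -- bound |S - R * N|
  have hRN : R * N = ∑ d ∈ Finset.Icc 1 Q, g d * ((N : ℝ) / d) := by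
    rw [hR, Rcoef1, Finset.sum_mul]
    exact Finset.sum_congr rfl fun d _ => by ring
  have hSsub : S - R * N = ∑ d ∈ Finset.Icc 1 Q,
      g d * (((((2 * N) / d : ℕ) : ℝ) - ((N / d : ℕ) : ℝ)) - (N : ℝ) / d) := by
    rw [hS, hf, S_eq g Q N hN, hRN, ← Finset.sum_sub_distrib]
    exact Finset.sum_congr rfl fun d _ => by ring
  have hSb : |S - R * N| ≤ (Q : ℝ) * (K * (Q : ℝ) ^ ε' * 2) := by
    have hterm2 : ∀ d ∈ Finset.Icc 1 Q,
        |g d * (((((2 * N) / d : ℕ) : ℝ) - ((N / d : ℕ) : ℝ)) - (N : ℝ) / d)|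
          ≤ K * (Q : ℝ) ^ ε' * 2 := by
      intro d hd
      obtain ⟨hd1, hdQ⟩ := Finset.mem_Icc.mp hd
      have hdpos : 0 < d := hd1
      have b1 := cast_div_bounds (2 * N) d hdpos
      have b2 := cast_div_bounds N d hdpos
      have hcast : ((2 * N : ℕ) : ℝ) / (d : ℝ) = 2 * ((N : ℝ) / d) := by
        push_cast; ring
      rw [hcast] at b1
      have habs : |((((2 * N) / d : ℕ) : ℝ) - ((N / d : ℕ) : ℝ)) - (N : ℝ) / d| ≤ 2 := by
        rw [abs_le] at b1 b2 ⊢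
        constructor <;> [linarith [b1.1, b2.2]; linarith [b1.2, b2.1]]
      rw [abs_mul]
      refine mul_le_mul ((hgd d hd1).trans
        (mul_le_mul_of_nonneg_left (hdQ' d hd) hKpos.le)) habs (abs_nonneg _) (by positivity)
    calc |S - R * N| ≤ ∑ d ∈ Finset.Icc 1 Q,
          |g d * (((((2 * N) / d : ℕ) : ℝ) - ((N / d : ℕ) : ℝ)) - (N : ℝ) / d)| := by
          rw [hSsub]; exact Finset.abs_sum_le_sum_abs _ _
      _ ≤ ∑ d ∈ Finset.Icc 1 Q, K * (Q : ℝ) ^ ε' * 2 := Finset.sum_le_sum hterm2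
      _ = (Q : ℝ) * (K * (Q : ℝ) ^ ε' * 2) := by
          rw [Finset.sum_const, Nat.card_Icc, nsmul_eq_mul]
          push_cast
          ring
  -- exponent bookkeeping
  have hQ3 : (Q : ℝ) ^ ε' * (Q : ℝ) ^ ε' * (Q : ℝ) ^ ε' ≤ (max A 1) ^ ε * (N : ℝ) ^ ε := by
    have e1 : (Q : ℝ) ^ ε' * (Q : ℝ) ^ ε' * (Q : ℝ) ^ ε' = (Q : ℝ) ^ (ε' + ε' + ε') := by
      rw [← Real.rpow_add hQR, ← Real.rpow_add hQR]
    have e2 : (Q : ℝ) ^ (ε' + ε' + ε') ≤ (A * N) ^ (ε' + ε' + ε') :=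
      Real.rpow_le_rpow (Nat.cast_nonneg Q) hQA (by positivity)
    have e3 : (A * N) ^ (ε' + ε' + ε') = A ^ (ε' + ε' + ε') * (N : ℝ) ^ (ε' + ε' + ε') :=
      Real.mul_rpow hA.le (Nat.cast_nonneg N)
    have e4 : A ^ (ε' + ε' + ε') ≤ (max A 1) ^ (ε' + ε' + ε') :=
      Real.rpow_le_rpow hA.le (le_max_left A 1) (by positivity)
    have e5 : (max A 1) ^ (ε' + ε' + ε') ≤ (max A 1) ^ ε :=
      Real.rpow_le_rpow_of_exponent_le hmax1 (by rw [hε']; linarith)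
    have e6 : (N : ℝ) ^ (ε' + ε' + ε') ≤ (N : ℝ) ^ ε :=
      Real.rpow_le_rpow_of_exponent_le hN1 (by rw [hε']; linarith)
    have hNε : (0 : ℝ) ≤ (N : ℝ) ^ (ε' + ε' + ε') := Real.rpow_nonneg (Nat.cast_nonneg N) _
    have hAε : (0 : ℝ) ≤ (max A 1) ^ ε := Real.rpow_pos_of_pos hmaxpos ε |>.le
    calc (Q : ℝ) ^ ε' * (Q : ℝ) ^ ε' * (Q : ℝ) ^ ε' ≤ A ^ (ε' + ε' + ε') * (N : ℝ) ^ (ε' + ε' + ε') := by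
          rw [e1, ← e3]; exact e2
      _ ≤ (max A 1) ^ ε * (N : ℝ) ^ (ε' + ε' + ε') := by
          refine mul_le_mul (e4.trans e5) le_rfl hNε hAε
      _ ≤ (max A 1) ^ ε * (N : ℝ) ^ ε := mul_le_mul_of_nonneg_left e6 hAε
  -- final assembly
  have habsH : |(H : ℝ)| = (H : ℝ) := abs_of_nonneg hH0
  calc |R * (H : ℝ) * (S - R * N)| = |R| * (H : ℝ) * |S - R * N| := by
        rw [abs_mul, abs_mul, habsH]
    _ ≤ (K * (1 + 4 / ε) * ((Q : ℝ) ^ ε' * (Q : ℝ) ^ ε')) * (H : ℝ) *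
          ((Q : ℝ) * (K * (Q : ℝ) ^ ε' * 2)) := by
        have h1 : (0:ℝ) ≤ |S - R * N| := abs_nonneg _
        have h2 : (0:ℝ) ≤ |R| * (H : ℝ) := mul_nonneg (abs_nonneg _) hH0
        refine mul_le_mul (mul_le_mul hRb le_rfl hH0 (by positivity)) hSb h1 (by positivity)
    _ = 2 * K ^ 2 * (1 + 4 / ε) * ((Q : ℝ) ^ ε' * (Q : ℝ) ^ ε' * (Q : ℝ) ^ ε') * (Q : ℝ) * (H : ℝ) := by
        ring
    _ ≤ 2 * K ^ 2 * (1 + 4 / ε) * ((max A 1) ^ ε * (N : ℝ) ^ ε) * (Q : ℝ) * (H : ℝ) := by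
        have hc : (0 : ℝ) ≤ 2 * K ^ 2 * (1 + 4 / ε) := by positivity
        have := mul_le_mul_of_nonneg_left hQ3 hc
        exact mul_le_mul_of_nonneg_right (mul_le_mul_of_nonneg_right this hQR.le) hH0
    _ = 2 * (|Cg (ε / 4)| + 1) ^ 2 * (1 + 4 / ε) * (max A 1) ^ ε * (N : ℝ) ^ ε * (Q : ℝ) * (H : ℝ) := by
        rw [hK, hε']
        ring
end
end
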